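/- For every n ≥ 0, every p in {1, …, 2^n}, and every natural number d such that 2^d divides p, one has p *_n (2^n − q) = 2^n − q for every q with 0 ≤ q < 2^d. -/

import Mathlib

/-- reduce `y` into `[1, m]` (for `y ≥ 1`): `pmod m y = ((y-1) % m) + 1`. -/
def pmod (m y : ℕ) : ℕ := (y - 1) % m + 1

lemma pmod_pos (m y : ℕ) : 1 ≤ pmod m y := Nat.succ_le_succ (Nat.zero_le _)

lemma pmod_le (m y : ℕ) (hm : 0 < m) : pmod m y ≤ m :=
  Nat.succ_le_of_lt (Nat.mod_lt _ hm)

lemma pmod_of_le {m y : ℕ} (h1 : 1 ≤ y) (h2 : y ≤ m) : pmod m y = y := by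
  unfold pmod
  rcases Nat.lt_or_ge (y - 1) m with h | h
  · rw [Nat.mod_eq_of_lt h]; omega
  · omega

lemma pmod_add_self {m y : ℕ} (h1 : 1 ≤ y) : pmod m (y + m) = pmod m y := by
  unfold pmod
  have : y + m - 1 = (y - 1) + m := by omega
  rw [this, Nat.add_mod_right]

lemma pmod_add_mul {m y : ℕ} (h1 : 1 ≤ y) (k : ℕ) : pmod m (y + k * m) = pmod m y := by
  induction k with
  | zero => simp
  | succ k ih =>
    have : y + (k+1) * m = (y + k * m) + m := by ring
    rw [this, pmod_add_self (by omega), ih]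

lemma pmod_of_between {m y : ℕ} (h1 : m < y) (h2 : y ≤ 2 * m) : pmod m y = y - m := by
  unfold pmod
  have h3 : (y - 1) % m = y - 1 - m := by
    rw [Nat.mod_eq_sub_mod (by omega), Nat.mod_eq_of_lt (by omega)]
  omega

lemma pmod_succ {m y : ℕ} (hy : 1 ≤ y) (hm : 0 < m) :
    pmod m (y + 1) = if pmod m y = m then 1 else pmod m y + 1 := by
  rcases Nat.eq_or_lt_of_le hm with hm1 | hm2
  · have : m = 1 := by omega
    subst this
    simp [pmod, Nat.mod_one]
  · unfold pmod
    have h1 : y + 1 - 1 = (y - 1) + 1 := by omega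
    rw [h1]
    have h2 : (y - 1) % m < m := Nat.mod_lt _ hm
    have key : ((y - 1) + 1) % m = ((y - 1) % m + 1) % m := by
      rw [Nat.add_mod]
      congr 1
      rw [Nat.mod_eq_of_lt hm2]
    by_cases h : (y - 1) % m + 1 = m
    · rw [if_pos (by omega), key, h, Nat.mod_self]
    · rw [if_neg (by omega), key, Nat.mod_eq_of_lt (by omega)]

lemma pmod_eq_self_iff {m y : ℕ} (hy : 1 ≤ y) (hm : 0 < m) : pmod m y = m ↔ m ∣ y := by
  unfold pmod
  constructor
  · intro h
    have h2 : (y - 1) % m = m - 1 := by omega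
    have h3 := Nat.div_add_mod (y - 1) m
    refine ⟨(y-1)/m + 1, ?_⟩
    rw [Nat.mul_succ]
    omega
  · rintro ⟨k, rfl⟩
    rcases k with _ | k
    · simp at hy
    · have e : m * (k+1) = m * k + m := Nat.mul_succ m k
      have e2 : m * (k+1) - 1 = (m - 1) + k * m := by
        rw [e, Nat.mul_comm m k]; omega
      rw [e2, Nat.add_mul_mod_self_right, Nat.mod_eq_of_lt (by omega)]
      omega

lemma pmod_fiber {m y : ℕ} (hy : 1 ≤ y) (h2 : y ≤ 2 * m) :
    y = pmod m y ∨ y = pmod m y + m := by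
  rcases le_or_gt y m with h | h
  · left; rw [pmod_of_le hy h]
  · right; rw [pmod_of_between h h2]; omega
/-- The `n`-th Laver table, defined by downward recursion on rows. -/
def L (n x y : ℕ) : ℕ :=
  if h : 2 ^ n ≤ x then y
  else
    match y with
    | 0 => 2 ^ n
    | Nat.succ y' =>
      let z := L n x y'
      if hz : x < z then L n z (x + 1) else 2 ^ n
termination_by (2 ^ n - x, y)
decreasing_by
  · exact Prod.Lex.right _ (Nat.lt_succ_self y')
  · exact Prod.Lex.left _ _ (Nat.sub_lt_sub_left (Nat.lt_of_not_le h) hz)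

lemma L_top {n x : ℕ} (h : 2 ^ n ≤ x) (y : ℕ) : L n x y = y := by
  rw [L.eq_def, dif_pos h]

lemma L_zero {n x : ℕ} (h : x < 2 ^ n) : L n x 0 = 2 ^ n := by
  rw [L.eq_def, dif_neg (by omega)]

lemma L_succ {n x y : ℕ} (h : x < 2 ^ n) (hz : x < L n x y) :
    L n x (y + 1) = L n (L n x y) (x + 1) := by
  conv_lhs => rw [L.eq_def]
  rw [dif_neg (by omega)]
  simp only []
  rw [dif_pos hz]

lemma L_bounds {n : ℕ} : ∀ x, 1 ≤ x → x < 2 ^ n → ∀ y, x < L n x y ∧ L n x y ≤ 2 ^ n := by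
  suffices H : ∀ k x, 2 ^ n - x ≤ k → 1 ≤ x → x < 2 ^ n →
      ∀ y, x < L n x y ∧ L n x y ≤ 2 ^ n by
    intro x hx1 hx2 y; exact H (2 ^ n - x) x le_rfl hx1 hx2 y
  intro k
  induction k with
  | zero => intro x hk hx1 hx2; omega
  | succ k ih =>
    intro x hk hx1 hx2 y
    induction y with
    | zero => rw [L_zero hx2]; omega
    | succ y ihy =>
      obtain ⟨h1, h2⟩ := ihy
      rw [L_succ hx2 h1]
      set z := L n x y with hz
      rcases Nat.eq_or_lt_of_le h2 with he | hlt
      · rw [he, L_top le_rfl]; omega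
      · have := ih z (by omega) (by omega) hlt (x + 1)
        omega

lemma L_gt {n x : ℕ} (hx1 : 1 ≤ x) (hx2 : x < 2 ^ n) (y : ℕ) : x < L n x y :=
  (L_bounds x hx1 hx2 y).1

lemma L_le {n x : ℕ} (hx1 : 1 ≤ x) (hx2 : x < 2 ^ n) (y : ℕ) : L n x y ≤ 2 ^ n :=
  (L_bounds x hx1 hx2 y).2

lemma L_succ' {n x y : ℕ} (hx1 : 1 ≤ x) (hx2 : x < 2 ^ n) :
    L n x (y + 1) = L n (L n x y) (x + 1) :=
  L_succ hx2 (L_gt hx1 hx2 y)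

lemma L_one {n x : ℕ} (hx1 : 1 ≤ x) (hx2 : x < 2 ^ n) : L n x 1 = x + 1 := by
  rw [show (1:ℕ) = 0 + 1 from rfl, L_succ' hx1 hx2, L_zero hx2, L_top le_rfl]

/-- the period of row `x` in the `n`-th Laver table -/
noncomputable def tau (n x : ℕ) : ℕ := sInf {y | 0 < y ∧ L n x y = 2 ^ n}

lemma tau_exists {n x : ℕ} (hx1 : 1 ≤ x) (hx2 : x < 2 ^ n) :
    ∃ y, (0 < y ∧ y ≤ 2 ^ n - x) ∧ L n x y = 2 ^ n := by
  have key : ∀ k, 1 ≤ k → (∃ j, (0 < j ∧ j ≤ k) ∧ L n x j = 2 ^ n) ∨ x + k ≤ L n x k := by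
    intro k
    induction k with
    | zero => omega
    | succ k ihk =>
      intro _
      rcases Nat.eq_or_lt_of_le (show 1 ≤ k + 1 from by omega) with h1 | h1
      · right; rw [← h1, L_one hx1 hx2]
      · rcases ihk (by omega) with ⟨j, hj1, hj2⟩ | hgr
        · exact Or.inl ⟨j, ⟨hj1.1, by omega⟩, hj2⟩
        · have hle := L_le hx1 hx2 k
          rcases Nat.eq_or_lt_of_le hle with he | hlt
          · exact Or.inl ⟨k, ⟨by omega, by omega⟩, he⟩
          · right
            rw [L_succ' hx1 hx2]
            have := L_gt (n := n) (x := L n x k) (by omega) hlt (x + 1)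
            omega
  rcases key (2 ^ n - x) (by omega) with ⟨j, hj1, hj2⟩ | hgr
  · exact ⟨j, hj1, hj2⟩
  · have hle := L_le hx1 hx2 (2 ^ n - x)
    exact ⟨2 ^ n - x, ⟨by omega, le_rfl⟩, by omega⟩

lemma tau_mem {n x : ℕ} (hx1 : 1 ≤ x) (hx2 : x < 2 ^ n) :
    0 < tau n x ∧ L n x (tau n x) = 2 ^ n := by
  obtain ⟨y, hy1, hy2⟩ := tau_exists hx1 hx2
  exact Nat.sInf_mem (⟨y, hy1.1, hy2⟩ : {y | 0 < y ∧ L n x y = 2 ^ n}.Nonempty)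

lemma tau_pos {n x : ℕ} (hx1 : 1 ≤ x) (hx2 : x < 2 ^ n) : 0 < tau n x :=
  (tau_mem hx1 hx2).1

lemma L_tau {n x : ℕ} (hx1 : 1 ≤ x) (hx2 : x < 2 ^ n) : L n x (tau n x) = 2 ^ n :=
  (tau_mem hx1 hx2).2

lemma tau_min {n x y : ℕ} (hy : 0 < y) (hyt : y < tau n x) : L n x y ≠ 2 ^ n := by
  intro h
  exact Nat.notMem_of_lt_sInf hyt ⟨hy, h⟩

lemma tau_le {n x y : ℕ} (hy : 0 < y) (h : L n x y = 2 ^ n) : tau n x ≤ y :=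
  Nat.sInf_le ⟨hy, h⟩

lemma tau_le_sub {n x : ℕ} (hx1 : 1 ≤ x) (hx2 : x < 2 ^ n) : tau n x ≤ 2 ^ n - x := by
  obtain ⟨y, hy1, hy2⟩ := tau_exists hx1 hx2
  exact le_trans (tau_le hy1.1 hy2) hy1.2

lemma L_add_tau {n x : ℕ} (hx1 : 1 ≤ x) (hx2 : x < 2 ^ n) (y : ℕ) :
    L n x (y + tau n x) = L n x y := by
  induction y with
  | zero => rw [Nat.zero_add, L_tau hx1 hx2, L_zero hx2]
  | succ y ih =>
    have : y + 1 + tau n x = (y + tau n x) + 1 := by omega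
    rw [this, L_succ' hx1 hx2, ih, ← L_succ' hx1 hx2]

lemma L_add_mul_tau {n x : ℕ} (hx1 : 1 ≤ x) (hx2 : x < 2 ^ n) (y k : ℕ) :
    L n x (y + k * tau n x) = L n x y := by
  induction k with
  | zero => simp
  | succ k ih =>
    have : y + (k+1) * tau n x = (y + k * tau n x) + tau n x := by ring
    rw [this, L_add_tau hx1 hx2, ih]

lemma L_eq_top_iff {n x : ℕ} (hx1 : 1 ≤ x) (hx2 : x < 2 ^ n) (y : ℕ) :
    L n x y = 2 ^ n ↔ tau n x ∣ y := by
  constructor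
  · intro h
    have ht := tau_pos hx1 hx2
    have : L n x (y % tau n x) = 2 ^ n := by
      have e : y % tau n x + y / tau n x * tau n x = y := Nat.mod_add_div' y (tau n x)
      rw [← e] at h
      rwa [L_add_mul_tau hx1 hx2] at h
    rcases Nat.eq_zero_or_pos (y % tau n x) with h0 | h0
    · exact Nat.dvd_of_mod_eq_zero h0
    · exact absurd this (tau_min h0 (Nat.mod_lt _ ht))
  · rintro ⟨k, rfl⟩
    rw [show tau n x * k = 0 + k * tau n x from by ring, L_add_mul_tau hx1 hx2, L_zero hx2]

lemma L_ne_top {n x y : ℕ} (hx1 : 1 ≤ x) (hx2 : x < 2 ^ n) (hy : 0 < y)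
    (h : ¬ (tau n x ∣ y)) : L n x y < 2 ^ n := by
  have := L_le hx1 hx2 y
  rcases Nat.eq_or_lt_of_le this with he | hlt
  · exact absurd ((L_eq_top_iff hx1 hx2 y).1 he) h
  · exact hlt

lemma L_chain_lt {n x : ℕ} (hx1 : 1 ≤ x) (hx2 : x < 2 ^ n) :
    ∀ j k, 1 ≤ j → j < k → (∀ i, j ≤ i → i < k → L n x i < 2 ^ n) →
      L n x j < L n x k := by
  intro j k
  induction k with
  | zero => omega
  | succ k ihk =>
    intro hj hjk hlt
    have hstep : L n x k < L n x (k + 1) := by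
      rw [L_succ' hx1 hx2]
      exact L_gt (n := n) (x := L n x k) (by have := L_gt hx1 hx2 k; omega)
        (hlt k (by omega) (by omega)) (x + 1)
    rcases Nat.eq_or_lt_of_le (show j ≤ k from by omega) with he | hltj
    · subst he; exact hstep
    · have := ihk hj hltj (fun i h1 h2 => hlt i h1 (by omega))
      omega

def POWn (n : ℕ) : Prop := ∀ x, 1 ≤ x → x < 2 ^ n → 2 * tau n x ∣ 2 ^ n

def TAILn (n : ℕ) : Prop :=
  ∀ x d q, 1 ≤ x → x ≤ 2 ^ n → 2 ^ d ∣ x → q < 2 ^ d → L n x (2 ^ n - q) = 2 ^ n - q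

def RHOn (n : ℕ) : Prop :=
  ∀ d m, 1 ≤ m → m < 2 ^ d → 2 ^ d ≤ 2 ^ n → 2 * tau n (2 ^ n - m) ∣ 2 ^ d

lemma tau_dvd_pow {n x : ℕ} (hPOW : POWn n) (hx1 : 1 ≤ x) (hx2 : x < 2 ^ n) :
    tau n x ∣ 2 ^ n :=
  dvd_trans (Dvd.intro_left 2 rfl) (hPOW x hx1 hx2)

lemma L_row_top {n x : ℕ} (hPOW : POWn n) (hx1 : 1 ≤ x) (hx2 : x < 2 ^ n) :
    L n x (2 ^ n) = 2 ^ n :=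
  (L_eq_top_iff hx1 hx2 _).2 (tau_dvd_pow hPOW hx1 hx2)

lemma Ltop_struct {n : ℕ} (hPOW : POWn n) :
    ∀ x', 1 ≤ x' → x' < 2 ^ n → ∀ y, 1 ≤ y →
      L (n+1) (x' + 2 ^ n) y = L n x' (pmod (2 ^ n) y) + 2 ^ n := by
  have hN : 2 ^ (n+1) = 2 * 2 ^ n := by rw [pow_succ]; ring
  have hN1 : 1 ≤ 2 ^ n := Nat.one_le_two_pow
  suffices H : ∀ k x', 2 ^ n - x' ≤ k → 1 ≤ x' → x' < 2 ^ n → ∀ y, 1 ≤ y →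
      L (n+1) (x' + 2 ^ n) y = L n x' (pmod (2 ^ n) y) + 2 ^ n by
    intro x' h1 h2; exact H (2 ^ n - x') x' le_rfl h1 h2
  intro k
  induction k with
  | zero => intro x' hk; omega
  | succ k ih =>
    intro x' hk hx1 hx2 y hy
    induction y with
    | zero => omega
    | succ y ihy =>
      rcases Nat.eq_or_lt_of_le hy with h1 | h1
      · -- y + 1 = 1
        have hy0 : y = 0 := by omega
        subst hy0
        rw [L_one (by omega) (by omega), pmod_of_le le_rfl hN1,
          L_one hx1 hx2]
        omega
      · -- y ≥ 1
        have hy1 : 1 ≤ y := by omega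
        have hx2' : x' + 2 ^ n < 2 ^ (n+1) := by omega
        rw [L_succ' (by omega) hx2', ihy hy1]
        have hwb := L_bounds x' hx1 hx2 (pmod (2 ^ n) y)
        have hpy1 : 1 ≤ pmod (2 ^ n) y := pmod_pos _ _
        have hpy2 : pmod (2 ^ n) y ≤ 2 ^ n := pmod_le _ _ (by omega)
        have hps := pmod_succ (m := 2 ^ n) hy1 (by omega)
        rcases Nat.eq_or_lt_of_le hwb.2 with he | hlt
        · -- w = 2^n, so the shifted row index is 2^(n+1)
          rw [he, L_top (by omega)]
          by_cases hc : pmod (2 ^ n) y = 2 ^ n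
          · rw [hps, if_pos hc, L_one hx1 hx2]
            omega
          · rw [hps, if_neg hc, L_succ' hx1 hx2, he, L_top le_rfl]
            omega
        · -- w < 2^n : use the downward induction hypothesis
          have hxw := hwb.1
          rw [ih _ (by omega) (by omega) hlt (x' + 2 ^ n + 1) (by omega)]
          have hpx : pmod (2 ^ n) (x' + 2 ^ n + 1) = x' + 1 := by
            rw [pmod_of_between (by omega) (by omega)]
            omega
          rw [hpx]
          by_cases hc : pmod (2 ^ n) y = 2 ^ n
          · exfalso
            rw [hc, L_row_top hPOW hx1 hx2] at hlt
            omega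
          · rw [hps, if_neg hc, L_succ' hx1 hx2]

lemma L_rowNprime {n : ℕ} (hPOW : POWn n) :
    ∀ y, 1 ≤ y → L (n+1) (2 ^ n) y = pmod (2 ^ n) y + 2 ^ n := by
  have hN : 2 ^ (n+1) = 2 * 2 ^ n := by rw [pow_succ]; ring
  have hN1 : 1 ≤ 2 ^ n := Nat.one_le_two_pow
  intro y hy
  induction y with
  | zero => omega
  | succ y ihy =>
    rcases Nat.eq_or_lt_of_le hy with h1 | h1
    · have hy0 : y = 0 := by omega
      subst hy0
      rw [L_one (by omega) (by omega), pmod_of_le le_rfl hN1]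
      omega
    · have hy1 : 1 ≤ y := by omega
      rw [L_succ' (by omega) (by omega), ihy hy1]
      have hp1 : 1 ≤ pmod (2 ^ n) y := pmod_pos _ _
      have hp2 : pmod (2 ^ n) y ≤ 2 ^ n := pmod_le _ _ (by omega)
      have hps := pmod_succ (m := 2 ^ n) hy1 (by omega)
      by_cases hc : pmod (2 ^ n) y = 2 ^ n
      · rw [hc, L_top (by omega), hps, if_pos hc]
        omega
      · rw [Ltop_struct hPOW _ hp1 (by omega) _ (by omega), hps, if_neg hc]
        have : pmod (2 ^ n) (2 ^ n + 1) = 1 := by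
          rw [pmod_of_between (by omega) (by omega)]
          omega
        rw [this, L_one hp1 (by omega)]

lemma tau_shift {n x' : ℕ} (hPOW : POWn n) (hx1 : 1 ≤ x') (hx2 : x' < 2 ^ n) :
    tau (n+1) (x' + 2 ^ n) = tau n x' := by
  have hN : 2 ^ (n+1) = 2 * 2 ^ n := by rw [pow_succ]; ring
  have hx1' : (1:ℕ) ≤ x' + 2 ^ n := by omega
  have hx2' : x' + 2 ^ n < 2 ^ (n+1) := by omega
  have ht1 := tau_pos hx1 hx2
  have ht2 : tau n x' < 2 ^ n := by have := tau_le_sub hx1 hx2; omega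
  have hup : L (n+1) (x' + 2 ^ n) (tau n x') = 2 ^ (n+1) := by
    rw [Ltop_struct hPOW x' hx1 hx2 _ ht1, pmod_of_le ht1 (by omega), L_tau hx1 hx2]
    omega
  have hle : tau (n+1) (x' + 2 ^ n) ≤ tau n x' := tau_le ht1 hup
  have htau1 := tau_pos hx1' hx2'
  have htop := L_tau hx1' hx2'
  rw [Ltop_struct hPOW x' hx1 hx2 _ htau1,
    pmod_of_le htau1 (by omega)] at htop
  have : L n x' (tau (n+1) (x' + 2 ^ n)) = 2 ^ n := by omega
  have hdvd := (L_eq_top_iff hx1 hx2 _).1 this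
  have := Nat.le_of_dvd htau1 hdvd
  omega

lemma tau_Nprime {n : ℕ} (hPOW : POWn n) : tau (n+1) (2 ^ n) = 2 ^ n := by
  have hN : 2 ^ (n+1) = 2 * 2 ^ n := by rw [pow_succ]; ring
  have hN1 : (1:ℕ) ≤ 2 ^ n := Nat.one_le_two_pow
  have hx1' : (1:ℕ) ≤ 2 ^ n := hN1
  have hx2' : (2:ℕ) ^ n < 2 ^ (n+1) := by omega
  have hup : L (n+1) (2 ^ n) (2 ^ n) = 2 ^ (n+1) := by
    rw [L_rowNprime hPOW _ hN1, pmod_of_le hN1 le_rfl]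
    omega
  have hle : tau (n+1) (2 ^ n) ≤ 2 ^ n := tau_le (by omega) hup
  have htau1 := tau_pos hx1' hx2'
  have htop := L_tau hx1' hx2'
  rw [L_rowNprime hPOW _ htau1] at htop
  have : pmod (2 ^ n) (tau (n+1) (2 ^ n)) = 2 ^ n := by omega
  have hdvd := (pmod_eq_self_iff htau1 (by omega)).1 this
  have := Nat.le_of_dvd htau1 hdvd
  omega

lemma L_hom {n : ℕ} (hPOW : POWn n) :
    ∀ x, 1 ≤ x → x ≤ 2 ^ (n+1) → ∀ y, 1 ≤ y →
      pmod (2 ^ n) (L (n+1) x y) = L n (pmod (2 ^ n) x) (pmod (2 ^ n) y) := by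
  have hN : 2 ^ (n+1) = 2 * 2 ^ n := by rw [pow_succ]; ring
  have hN1 : (1:ℕ) ≤ 2 ^ n := Nat.one_le_two_pow
  have top : ∀ x, 2 ^ n ≤ x → x ≤ 2 ^ (n+1) → ∀ y, 1 ≤ y →
      pmod (2 ^ n) (L (n+1) x y) = L n (pmod (2 ^ n) x) (pmod (2 ^ n) y) := by
    intro x hxl hxr y hy
    have hpy1 : 1 ≤ pmod (2 ^ n) y := pmod_pos _ _
    have hpy2 : pmod (2 ^ n) y ≤ 2 ^ n := pmod_le _ _ (by omega)
    rcases Nat.eq_or_lt_of_le hxl with he | hgt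
    · -- x = 2^n
      subst he
      rw [L_rowNprime hPOW _ hy,
        pmod_of_le (m := 2 ^ n) (y := 2 ^ n) hN1 le_rfl,
        L_top le_rfl,
        pmod_of_between (m := 2 ^ n) (y := pmod (2 ^ n) y + 2 ^ n)
          (by omega) (by omega)]
      omega
    · rcases Nat.eq_or_lt_of_le hxr with he2 | hlt2
      · -- x = 2^(n+1)
        subst he2
        have e : pmod (2 ^ n) (2 ^ (n+1)) = 2 ^ n := by
          rw [show 2 ^ (n+1) = 2 ^ n + 2 ^ n from by omega,
            pmod_add_self hN1, pmod_of_le hN1 le_rfl]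
        rw [L_top le_rfl, e, L_top le_rfl]
      · -- 2^n < x < 2^(n+1)
        have hx' : x = (x - 2 ^ n) + 2 ^ n := by omega
        have hb := L_bounds (n := n) (x - 2 ^ n) (by omega) (by omega) (pmod (2 ^ n) y)
        have hpmx : pmod (2 ^ n) x = x - 2 ^ n := pmod_of_between hgt (by omega)
        conv_lhs => rw [hx']
        rw [Ltop_struct hPOW _ (by omega) (by omega) _ hy, hpmx,
          pmod_of_between (m := 2 ^ n) (y := L n (x - 2 ^ n) (pmod (2 ^ n) y) + 2 ^ n)
            (by omega) (by omega)]
        omega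
  suffices H : ∀ k x, 2 ^ n - x ≤ k → 1 ≤ x → x < 2 ^ n → ∀ y, 1 ≤ y →
      pmod (2 ^ n) (L (n+1) x y) = L n (pmod (2 ^ n) x) (pmod (2 ^ n) y) by
    intro x hx1 hx2 y hy
    rcases Nat.lt_or_ge x (2 ^ n) with h | h
    · exact H (2 ^ n - x) x le_rfl hx1 h y hy
    · exact top x h hx2 y hy
  intro k
  induction k with
  | zero => intro x hk; omega
  | succ k ih =>
    intro x hk hx1 hx2 y hy
    have hpx : pmod (2 ^ n) x = x := pmod_of_le hx1 (by omega)
    have key : ∀ z, x < z → z ≤ 2 ^ (n+1) →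
        pmod (2 ^ n) (L (n+1) z (x+1)) = L n (pmod (2 ^ n) z) (x+1) := by
      intro z hz1 hz2
      have hpx1 : pmod (2 ^ n) (x+1) = x + 1 := pmod_of_le (by omega) (by omega)
      rcases Nat.lt_or_ge z (2 ^ n) with h | h
      · rw [ih z (by omega) (by omega) h (x+1) (by omega), hpx1]
      · rw [top z h hz2 (x+1) (by omega), hpx1]
    induction y with
    | zero => omega
    | succ y ihy =>
      rcases Nat.eq_or_lt_of_le hy with h1 | h1
      · have hy0 : y = 0 := by omega
        subst hy0
        rw [L_one hx1 (by omega),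
          pmod_of_le (m := 2 ^ n) (y := x + 1) (by omega) (by omega),
          pmod_of_le (m := 2 ^ n) (y := 1) le_rfl hN1, hpx, L_one hx1 hx2]
      · have hy1 : 1 ≤ y := by omega
        have hzb := L_bounds (n := n+1) x hx1 (by omega) y
        rw [L_succ' hx1 (by omega), key _ hzb.1 hzb.2]
        have hiy := ihy hy1
        rw [hpx] at hiy
        rw [hiy]
        have hps := pmod_succ (m := 2 ^ n) hy1 (by omega)
        have hpy1 : 1 ≤ pmod (2 ^ n) y := pmod_pos _ _
        by_cases hc : pmod (2 ^ n) y = 2 ^ n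
        · rw [hps, if_pos hc, hpx, hc, L_row_top hPOW hx1 hx2, L_top le_rfl,
            L_one hx1 hx2]
        · rw [hps, if_neg hc, hpx, L_succ' hx1 hx2]

lemma pmod_topN (n : ℕ) : pmod (2 ^ n) (2 ^ (n+1)) = 2 ^ n := by
  have hN1 : (1:ℕ) ≤ 2 ^ n := Nat.one_le_two_pow
  rw [show 2 ^ (n+1) = 2 ^ n + 2 ^ n from by rw [pow_succ]; ring,
    pmod_add_self hN1, pmod_of_le hN1 le_rfl]

lemma vtp_cases {n x : ℕ} (hPOW : POWn n) (hx1 : 1 ≤ x) (hx2 : x < 2 ^ n) :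
    L (n+1) x (tau n x) = 2 ^ n ∨ L (n+1) x (tau n x) = 2 ^ (n+1) := by
  have hN : 2 ^ (n+1) = 2 * 2 ^ n := by rw [pow_succ]; ring
  have ht1 := tau_pos hx1 hx2
  have ht2 : tau n x < 2 ^ n := by have := tau_le_sub hx1 hx2; omega
  have hb := L_bounds (n := n+1) x hx1 (by omega) (tau n x)
  have hhom := L_hom hPOW x hx1 (by omega) (tau n x) ht1
  rw [pmod_of_le hx1 (by omega), pmod_of_le ht1 (by omega), L_tau hx1 hx2] at hhom
  have := pmod_fiber (m := 2 ^ n) (y := L (n+1) x (tau n x)) (by omega) (by omega)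
  omega

lemma same_case {n x : ℕ} (hPOW : POWn n) (hx1 : 1 ≤ x) (hx2 : x < 2 ^ n)
    (hv : L (n+1) x (tau n x) = 2 ^ (n+1)) : tau (n+1) x = tau n x := by
  have hN : 2 ^ (n+1) = 2 * 2 ^ n := by rw [pow_succ]; ring
  have ht1 := tau_pos hx1 hx2
  have ht2 : tau n x < 2 ^ n := by have := tau_le_sub hx1 hx2; omega
  have hle : tau (n+1) x ≤ tau n x := tau_le ht1 hv
  have htau1 : 0 < tau (n+1) x := tau_pos hx1 (by omega)
  have htop := L_tau hx1 (show x < 2 ^ (n+1) from by omega)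
  have hhom := L_hom hPOW x hx1 (by omega) (tau (n+1) x) htau1
  rw [pmod_of_le hx1 (by omega), pmod_of_le htau1 (by omega), htop, pmod_topN] at hhom
  have hdvd := (L_eq_top_iff hx1 hx2 _).1 hhom.symm
  have := Nat.le_of_dvd htau1 hdvd
  omega

lemma double_case {n x : ℕ} (hPOW : POWn n) (hx1 : 1 ≤ x) (hx2 : x < 2 ^ n)
    (hv : L (n+1) x (tau n x) = 2 ^ n) :
    tau (n+1) x = 2 * tau n x ∧
      ∀ k, 1 ≤ k → k ≤ tau n x → L (n+1) x (tau n x + k) = L (n+1) x k + 2 ^ n := by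
  have hN : 2 ^ (n+1) = 2 * 2 ^ n := by rw [pow_succ]; ring
  have hN1 : (1:ℕ) ≤ 2 ^ n := Nat.one_le_two_pow
  have ht1 := tau_pos hx1 hx2
  have ht2 : tau n x < 2 ^ n := by have := tau_le_sub hx1 hx2; omega
  have hx2' : x < 2 ^ (n+1) := by omega
  have h2t : 2 * tau n x ≤ 2 ^ n := Nat.le_of_dvd (by omega) (hPOW x hx1 hx2)
  -- no value equals 2^(n+1) at indices 1 ≤ j < 2 * tau n x
  have noN : ∀ j, 1 ≤ j → j < 2 * tau n x → L (n+1) x j ≠ 2 ^ (n+1) := by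
    intro j hj1 hj2 heq
    have hhom := L_hom hPOW x hx1 (by omega) j hj1
    rw [pmod_of_le hx1 (by omega), pmod_of_le hj1 (by omega), heq, pmod_topN] at hhom
    have hdvd := (L_eq_top_iff hx1 hx2 _).1 hhom.symm
    have := Nat.le_of_dvd hj1 hdvd
    have : j = tau n x := by
      rcases hdvd with ⟨c, rfl⟩
      rcases c with _ | _ | c
      · omega
      · omega
      · exfalso; nlinarith [ht1]
    rw [this, hv] at heq
    omega
  have mono : ∀ j k, 1 ≤ j → j < k → k ≤ 2 * tau n x → L (n+1) x j < L (n+1) x k := by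
    intro j k hj hjk hk
    refine L_chain_lt hx1 hx2' j k hj hjk (fun i h1 h2 => ?_)
    have h3 := L_le hx1 hx2' i
    have h4 := noN i (by omega) (by omega)
    omega
  have vlt : ∀ k, 1 ≤ k → k < tau n x → L (n+1) x k < 2 ^ n := by
    intro k h1 h2
    have := mono k (tau n x) h1 h2 (by omega)
    omega
  have vle : ∀ k, 1 ≤ k → k ≤ tau n x → L (n+1) x k ≤ 2 ^ n := by
    intro k h1 h2
    rcases Nat.eq_or_lt_of_le h2 with he | hlt
    · rw [he, hv]
    · exact le_of_lt (vlt k h1 hlt)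
  have lift : ∀ k, 1 ≤ k → k ≤ tau n x →
      L (n+1) x (tau n x + k) = L (n+1) x k + 2 ^ n := by
    intro k
    induction k with
    | zero => omega
    | succ k ihk =>
      intro h1 h2
      rcases Nat.eq_or_lt_of_le h1 with he | hgt
      · -- k + 1 = 1
        have hk0 : k = 0 := by omega
        subst hk0
        rw [L_succ' hx1 hx2', hv, L_rowNprime hPOW _ (by omega),
          pmod_of_le (by omega) (by omega), L_one hx1 hx2']
      · have hk1 : 1 ≤ k := by omega
        have e1 : tau n x + (k + 1) = (tau n x + k) + 1 := by omega
        rw [e1, L_succ' hx1 hx2', ihk hk1 (by omega)]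
        have hvk1 : 1 ≤ L (n+1) x k := by have := L_gt hx1 hx2' k; omega
        have hvklt : L (n+1) x k < 2 ^ n := vlt k hk1 (by omega)
        rw [Ltop_struct hPOW _ hvk1 hvklt _ (by omega),
          pmod_of_le (m := 2 ^ n) (y := x + 1) (by omega) (by omega)]
        -- now need : L n (L (n+1) x k) (x+1) = L (n+1) x (k+1)
        have hhom := L_hom hPOW (L (n+1) x k) hvk1 (by omega) (x+1) (by omega)
        rw [pmod_of_le hvk1 (by omega),
          pmod_of_le (m := 2 ^ n) (y := x + 1) (by omega) (by omega),
          ← L_succ' hx1 hx2',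
          pmod_of_le (by have := L_gt hx1 hx2' (k+1); omega)
            (vle (k+1) (by omega) h2)] at hhom
        rw [← hhom]
  refine ⟨?_, lift⟩
  have hv2t : L (n+1) x (2 * tau n x) = 2 ^ (n+1) := by
    have := lift (tau n x) ht1 le_rfl
    rw [show 2 * tau n x = tau n x + tau n x from by ring, this, hv]
    omega
  have hle : tau (n+1) x ≤ 2 * tau n x := tau_le (by omega) hv2t
  have htau1 : 0 < tau (n+1) x := tau_pos hx1 (by omega)
  have htop := L_tau hx1 hx2'
  rcases Nat.lt_or_ge (tau (n+1) x) (2 * tau n x) with h | h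
  · exact absurd htop (noN _ htau1 h)
  · omega

lemma tau_dich {n x : ℕ} (hPOW : POWn n) (hx1 : 1 ≤ x) (hx2 : x < 2 ^ n) :
    tau (n+1) x = tau n x ∨ tau (n+1) x = 2 * tau n x := by
  rcases vtp_cases hPOW hx1 hx2 with hv | hv
  · exact Or.inr (double_case hPOW hx1 hx2 hv).1
  · exact Or.inl (same_case hPOW hx1 hx2 hv)

lemma POW_succ {n : ℕ} (hPOW : POWn n) : POWn (n+1) := by
  intro x hx1 hx2
  have hN : 2 ^ (n+1) = 2 * 2 ^ n := by rw [pow_succ]; ring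
  rcases Nat.lt_or_ge x (2 ^ n) with h | h
  · rcases tau_dich hPOW hx1 h with he | he
    · rw [he]
      exact dvd_trans (hPOW x hx1 h) ⟨2, by omega⟩
    · rw [he, hN]
      exact Nat.mul_dvd_mul_left 2 (hPOW x hx1 h)
  · rcases Nat.eq_or_lt_of_le h with he | hgt
    · rw [← he, tau_Nprime hPOW]
      exact ⟨1, by omega⟩
    · have hx' : x = (x - 2 ^ n) + 2 ^ n := by omega
      rw [hx', tau_shift hPOW (by omega) (by omega)]
      exact dvd_trans (hPOW (x - 2 ^ n) (by omega) (by omega)) ⟨2, by omega⟩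

lemma RHO_succ {n : ℕ} (hPOW : POWn n) (hRHO : RHOn n) : RHOn (n+1) := by
  intro d m hm1 hm2 hle
  have hN : 2 ^ (n+1) = 2 * 2 ^ n := by rw [pow_succ]; ring
  rcases le_or_gt (2 ^ d) (2 ^ n) with h | h
  · have hm2n : m < 2 ^ n := by omega
    have he : 2 ^ (n+1) - m = (2 ^ n - m) + 2 ^ n := by omega
    rw [he, tau_shift hPOW (by omega) (by omega)]
    exact hRHO d m hm1 hm2 h
  · have hd : n < d := by
      by_contra hc
      push_neg at hc
      have := Nat.pow_le_pow_right (show 0 < 2 from by norm_num) hc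
      omega
    have hdn : n + 1 ≤ d := hd
    have hdvd : (2:ℕ) ^ (n+1) ∣ 2 ^ d := pow_dvd_pow 2 hdn
    have hm2n : m < 2 ^ (n+1) := by omega
    exact dvd_trans (POW_succ hPOW (2 ^ (n+1) - m) (by omega) (by omega)) hdvd

lemma TAIL_succ {n : ℕ} (hPOW : POWn n) (hRHO : RHOn n) (hTAIL : TAILn n) :
    TAILn (n+1) := by
  have hPOW1 : POWn (n+1) := POW_succ hPOW
  intro x d q hx1 hx2 hdvd hq
  have hN : 2 ^ (n+1) = 2 * 2 ^ n := by rw [pow_succ]; ring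
  have hN1 : (1:ℕ) ≤ 2 ^ n := Nat.one_le_two_pow
  have h2dx : 2 ^ d ≤ x := Nat.le_of_dvd (by omega) hdvd
  rcases Nat.eq_or_lt_of_le hx2 with hetop | hxlt
  · rw [hetop, L_top le_rfl]
  -- now x < 2^(n+1)
  rcases Nat.eq_zero_or_pos q with hq0 | hq1
  · subst hq0
    rw [Nat.sub_zero]
    exact L_row_top hPOW1 hx1 hxlt
  -- now 1 ≤ q < 2^d, hence 2^d ≥ 2
  have h2d2 : 2 ≤ 2 ^ d := by omega
  rcases Nat.lt_or_ge x (2 ^ n) with hxN | hxN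
  · -- main case : x in the bottom half
    have hd2n : 2 ^ d ≤ 2 ^ n := by omega
    set t' := tau n x with ht'
    have ht'1 := tau_pos hx1 hxN
    have ht'2 : t' < 2 ^ n := by have := tau_le_sub hx1 hxN; omega
    have ht'dvd : t' ∣ 2 ^ n := tau_dvd_pow hPOW hx1 hxN
    have h2t : 2 * t' ≤ 2 ^ n := Nat.le_of_dvd (by omega) (hPOW x hx1 hxN)
    -- 2^d ≤ t'
    have h2dt' : 2 ^ d ≤ t' := by
      by_contra hc
      push_neg at hc
      have e1 : L n x (2 ^ n - t') = 2 ^ n - t' := hTAIL x d t' hx1 (by omega) hdvd hc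
      have e2 : L n x ((2 ^ n - t') + t') = L n x (2 ^ n - t') := L_add_tau hx1 hxN _
      rw [show (2 ^ n - t') + t' = 2 ^ n from by omega, L_row_top hPOW hx1 hxN, e1] at e2
      omega
    -- transition lemma
    have TL : ∀ m, 1 ≤ m → m < 2 ^ d → L (n+1) (2 ^ n - m) (x + 1) = 2 ^ n - m + 1 := by
      intro m hm1 hm2
      have hz1 : (1:ℕ) ≤ 2 ^ n - m := by omega
      have hz2 : 2 ^ n - m < 2 ^ n := by omega
      have hrho := hRHO d m hm1 hm2 hd2n
      have hztau : tau (n+1) (2 ^ n - m) ∣ 2 ^ d := by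
        rcases tau_dich hPOW hz1 hz2 with he | he
        · rw [he]
          exact dvd_trans (Dvd.intro_left 2 rfl) hrho
        · rw [he]; exact hrho
      have hzx : tau (n+1) (2 ^ n - m) ∣ x := dvd_trans hztau hdvd
      have e : x + 1 = 1 + x / tau (n+1) (2 ^ n - m) * tau (n+1) (2 ^ n - m) := by
        rw [Nat.div_mul_cancel hzx]; omega
      rw [e, L_add_mul_tau hz1 (by omega), L_one hz1 (by omega)]
    -- value of pmod at the tail positions within one period of the base row
    have hv' : ∀ q', 1 ≤ q' → q' < 2 ^ d →
        pmod (2 ^ n) (L (n+1) x (t' - q')) = 2 ^ n - q' := by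
      intro q' h1 h2
      have htq1 : (1:ℕ) ≤ t' - q' := by omega
      have hhom := L_hom hPOW x hx1 (by omega) (t' - q') htq1
      rw [pmod_of_le hx1 (by omega), pmod_of_le htq1 (by omega)] at hhom
      obtain ⟨c, hc⟩ := ht'dvd
      have e : (t' - q') + (c - 1) * t' = 2 ^ n - q' := by
        rw [Nat.sub_mul, one_mul, Nat.mul_comm]
        omega
      have e2 : L n x (t' - q') = 2 ^ n - q' := by
        have := L_add_mul_tau hx1 hxN (t' - q') (c - 1)
        rw [← ht', e] at this
        rw [← this]
        exact hTAIL x d q' hx1 (by omega) hdvd h2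
      rw [hhom, e2]
    have hfib : ∀ q', 1 ≤ q' → q' < 2 ^ d →
        L (n+1) x (t' - q') = 2 ^ n - q' ∨ L (n+1) x (t' - q') = 2 ^ (n+1) - q' := by
      intro q' h1 h2
      have hb := L_bounds (n := n+1) x hx1 hxlt (t' - q')
      have := pmod_fiber (m := 2 ^ n) (y := L (n+1) x (t' - q')) (by omega) (by omega)
      rcases this with h | h
      · left; rw [h, hv' q' h1 h2]
      · right; rw [h, hv' q' h1 h2]; omega
    rcases vtp_cases hPOW hx1 hxN with hv | hv
    · -- DOUBLE case
      obtain ⟨htau, lift⟩ := double_case hPOW hx1 hxN hv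
      have noN : ∀ j, 1 ≤ j → j < 2 * t' → L (n+1) x j ≠ 2 ^ (n+1) := by
        intro j hj1 hj2 heq
        have hhom := L_hom hPOW x hx1 (by omega) j hj1
        rw [pmod_of_le hx1 (by omega), pmod_of_le hj1 (by omega), heq, pmod_topN] at hhom
        have hdvdj := (L_eq_top_iff hx1 hxN _).1 hhom.symm
        rw [← ht'] at hdvdj
        have hj : j = t' := by
          rcases hdvdj with ⟨c, rfl⟩
          rcases c with _ | _ | c
          · omega
          · omega
          · exfalso; nlinarith [ht'1]
        rw [hj, hv] at heq
        omega
      have hmono : L (n+1) x (t' - q) < L (n+1) x t' := by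
        refine L_chain_lt hx1 hxlt (t' - q) t' (by omega) (by omega) (fun i h1 h2 => ?_)
        have h3 := L_le hx1 hxlt i
        have h4 := noN i (by omega) (by omega)
        omega
      have hbot : L (n+1) x (t' - q) = 2 ^ n - q := by
        rcases hfib q hq1 hq with h | h
        · exact h
        · rw [h, hv] at hmono; omega
      have hlift := lift (t' - q) (by omega) (by omega)
      rw [hbot] at hlift
      obtain ⟨c, hc⟩ : 2 * t' ∣ 2 ^ (n+1) := by
        refine dvd_trans (hPOW x hx1 hxN) ⟨2, by omega⟩
      have e : (2 * t' - q) + (c - 1) * (2 * t') = 2 ^ (n+1) - q := by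
        rw [Nat.sub_mul, one_mul, Nat.mul_comm c (2 * t')]
        omega
      have := L_add_mul_tau hx1 hxlt (2 * t' - q) (c - 1)
      rw [htau, ← ht', e] at this
      rw [← ht'] at hlift
      rw [this, show 2 * t' - q = t' + (t' - q) from by omega, hlift]
      omega
    · -- SAME case
      have htau := same_case hPOW hx1 hxN hv
      have claim : L (n+1) x (t' - q) = 2 ^ (n+1) - q := by
        rcases hfib q hq1 hq with hbot | htop
        · exfalso
          have climb : ∀ i, i ≤ q → L (n+1) x (t' - q + i) = 2 ^ n - q + i := by
            intro i
            induction i with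
            | zero => simpa using hbot
            | succ i ihi =>
              intro hi
              have e1 : t' - q + (i+1) = (t' - q + i) + 1 := by omega
              rw [e1, L_succ' hx1 hxlt, ihi (by omega)]
              have e2 : 2 ^ n - q + i = 2 ^ n - (q - i) := by omega
              rw [e2, TL (q - i) (by omega) (by omega)]
              omega
          have := climb q le_rfl
          rw [show t' - q + q = t' from by omega, hv] at this
          omega
        · exact htop
      obtain ⟨c, hc⟩ : t' ∣ 2 ^ (n+1) := dvd_trans ht'dvd ⟨2, by omega⟩
      have e : (t' - q) + (c - 1) * t' = 2 ^ (n+1) - q := by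
        rw [Nat.sub_mul, one_mul, Nat.mul_comm c t']
        omega
      have := L_add_mul_tau hx1 hxlt (t' - q) (c - 1)
      rw [htau, ← ht', e] at this
      rw [this, claim]
  · -- x in the top half
    have hd2n : 2 ^ d ≤ 2 ^ n := by
      rcases Nat.lt_or_ge d (n+1) with h | h
      · have : d ≤ n := by omega
        exact Nat.pow_le_pow_right (by norm_num) this
      · have := Nat.pow_le_pow_right (show 0 < 2 from by norm_num) h
        omega
    rcases Nat.eq_or_lt_of_le hxN with he | hgt
    · -- x = 2^n
      rw [← he, L_rowNprime hPOW _ (by omega),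
        pmod_of_between (by omega) (by omega)]
      omega
    · -- 2^n < x < 2^(n+1)
      have hx' : x = (x - 2 ^ n) + 2 ^ n := by omega
      have hdvd' : 2 ^ d ∣ x - 2 ^ n := by
        have : (2:ℕ) ^ d ∣ 2 ^ n := by
          rcases Nat.lt_or_ge n d with h | h
          · have := Nat.pow_le_pow_right (show 0 < 2 from by norm_num) h
            omega
          · exact pow_dvd_pow 2 h
        exact Nat.dvd_sub hdvd this
      conv_lhs => rw [hx']
      rw [Ltop_struct hPOW _ (by omega) (by omega) _ (by omega),
        pmod_of_between (m := 2 ^ n) (y := 2 ^ (n+1) - q) (by omega) (by omega)]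
      have := hTAIL (x - 2 ^ n) d q (by omega) (by omega) hdvd' hq
      rw [show 2 ^ (n+1) - q - 2 ^ n = 2 ^ n - q from by omega, this]
      omega

theorem laver_package : ∀ n, POWn n ∧ RHOn n ∧ TAILn n := by
  intro n
  induction n with
  | zero =>
    refine ⟨?_, ?_, ?_⟩
    · intro x hx1 hx2
      norm_num at hx2
      omega
    · intro d m hm1 hm2 hle
      norm_num at hle
      have : (2:ℕ) ^ d = 1 := by
        have : (1:ℕ) ≤ 2 ^ d := Nat.one_le_two_pow
        omega
      omega
    · intro x d q hx1 hx2 hdvd hq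
      norm_num at hx2 ⊢
      have hx : x = 1 := by omega
      have : (2:ℕ) ^ d ≤ 1 := by
        rw [← hx]; exact Nat.le_of_dvd (by omega) hdvd
      have hq0 : q = 0 := by omega
      subst hq0
      rw [hx, Nat.sub_zero, L_top (by norm_num)]
  | succ n ih =>
    exact ⟨POW_succ ih.1, RHO_succ ih.1 ih.2.1, TAIL_succ ih.1 ih.2.1 ih.2.2⟩

/-- `op` is the Laver table operation on `{1, …, 2^n}`: it maps the set to itself,
satisfies `x * 1 = x + 1` for `x < 2^n`, `2^n * 1 = 1`, and
`x * (y * 1) = (x * y) * (x * 1)`. -/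
def IsLaverOp (n : ℕ) (op : ℕ → ℕ → ℕ) : Prop :=
  (∀ x y, 1 ≤ x → x ≤ 2 ^ n → 1 ≤ y → y ≤ 2 ^ n → 1 ≤ op x y ∧ op x y ≤ 2 ^ n) ∧
  (∀ x, 1 ≤ x → x < 2 ^ n → op x 1 = x + 1) ∧
  (op (2 ^ n) 1 = 1) ∧
  (∀ x y, 1 ≤ x → x ≤ 2 ^ n → 1 ≤ y → y ≤ 2 ^ n → op x (op y 1) = op (op x y) (op x 1))

lemma IsLaverOp.rowN {n : ℕ} {op : ℕ → ℕ → ℕ} (h : IsLaverOp n op) :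
    ∀ y, 1 ≤ y → y ≤ 2 ^ n → op (2 ^ n) y = y := by
  have hN1 : (1:ℕ) ≤ 2 ^ n := Nat.one_le_two_pow
  intro y
  induction y with
  | zero => omega
  | succ y ihy =>
    intro h1' h2'
    rcases Nat.eq_or_lt_of_le h1' with he | hgt
    · have hy0 : y = 0 := by omega
      subst hy0
      exact h.2.2.1
    · have hy1 : 1 ≤ y := by omega
      have hyop : op y 1 = y + 1 := h.2.1 y hy1 (by omega)
      calc op (2 ^ n) (y+1) = op (2 ^ n) (op y 1) := by rw [hyop]
        _ = op (op (2 ^ n) y) (op (2 ^ n) 1) :=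
            h.2.2.2 (2 ^ n) y hN1 le_rfl hy1 (by omega)
        _ = op y 1 := by rw [ihy hy1 (by omega), h.2.2.1]
        _ = y + 1 := hyop

lemma IsLaverOp.eq_L {n : ℕ} {op : ℕ → ℕ → ℕ} (h : IsLaverOp n op) :
    ∀ x, 1 ≤ x → x ≤ 2 ^ n → ∀ y, 1 ≤ y → y ≤ 2 ^ n → op x y = L n x y := by
  have hN1 : (1:ℕ) ≤ 2 ^ n := Nat.one_le_two_pow
  suffices H : ∀ k x, 2 ^ n - x ≤ k → 1 ≤ x → x ≤ 2 ^ n → ∀ y, 1 ≤ y → y ≤ 2 ^ n →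
      op x y = L n x y by
    intro x hx1 hx2; exact H (2 ^ n - x) x le_rfl hx1 hx2
  intro k
  induction k with
  | zero =>
    intro x hk hx1 hx2 y hy1 hy2
    have hx : x = 2 ^ n := by omega
    subst hx
    rw [h.rowN y hy1 hy2, L_top le_rfl]
  | succ k ih =>
    intro x hk hx1 hx2 y hy1 hy2
    rcases Nat.eq_or_lt_of_le hx2 with he | hxlt
    · subst he
      rw [h.rowN y hy1 hy2, L_top le_rfl]
    · induction y with
      | zero => omega
      | succ y ihy =>
        rcases Nat.eq_or_lt_of_le hy1 with he | hgt
        · have hy0 : y = 0 := by omega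
          subst hy0
          rw [h.2.1 x hx1 hxlt, L_one hx1 hxlt]
        · have hy1' : 1 ≤ y := by omega
          have hxy : op x y = L n x y := ihy hy1' (by omega)
          have hz := L_bounds (n := n) x hx1 hxlt y
          have step1 : op x (y+1) = op (L n x y) (x+1) := by
            rw [show y + 1 = op y 1 from (h.2.1 y hy1' (by omega)).symm,
              h.2.2.2 x y hx1 (by omega) hy1' (by omega), hxy, h.2.1 x hx1 hxlt]
          rw [step1, L_succ' hx1 hxlt]
          rcases Nat.eq_or_lt_of_le hz.2 with hze | hzlt
          · rw [hze, h.rowN (x+1) (by omega) (by omega), L_top le_rfl]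
          · exact ih (L n x y) (by omega) (by omega) (by omega) (x+1) (by omega) (by omega)

/-- If `2^d` divides `p`, then `p *_n (2^n − q) = 2^n − q` holds for `0 ≤ q < 2^d`. -/
theorem laver_tail_fixed (n : ℕ) (op : ℕ → ℕ → ℕ) (h : IsLaverOp n op)
    (p : ℕ) (hp1 : 1 ≤ p) (hp2 : p ≤ 2 ^ n)
    (d : ℕ) (hd : 2 ^ d ∣ p) :
    ∀ q, q < 2 ^ d → op p (2 ^ n - q) = 2 ^ n - q := by
  intro q hq
  have h2d : 2 ^ d ≤ p := Nat.le_of_dvd (by omega) hd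
  have harg1 : 1 ≤ 2 ^ n - q := by omega
  have harg2 : 2 ^ n - q ≤ 2 ^ n := by omega
  rw [h.eq_L p hp1 hp2 (2 ^ n - q) harg1 harg2]
  exact (laver_package n).2.2 p d q hp1 hp2 hd hq
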